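/- Assume 0 < τ < τ*. Define W_0 = 0 and W_{k+1} = B̃_{-1}(τ,W_k) + B̃_1(τ) W_k² for k = 0,1,…. Then 0 ≤ W_k ≤ W_{k+1} and W_{k+1}1 ≤ 1 for all k; the limit W_min = lim_{k→∞} W_k exists, is substochastic, solves equation (QW), and satisfies W_min ≤ Ŵ for every substochastic solution Ŵ of (QW). -/

import Mathlib

open MeasureTheory Matrix Filter

noncomputable section

/-- Entrywise Bochner integral over `(0,∞)` of a matrix-valued function. -/
def intP {n : ℕ} (f : ℝ → Matrix (Fin n) (Fin n) ℝ) : Matrix (Fin n) (Fin n) ℝ :=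
  Matrix.of fun i j => ∫ x in Set.Ioi (0:ℝ), f x i j

/-- Matrix exponential. -/
def mexp {n : ℕ} (A : Matrix (Fin n) (Fin n) ℝ) : Matrix (Fin n) (Fin n) ℝ :=
  NormedSpace.exp A

/-- `∫_0^x e^{Gs} ds` (entrywise). -/
def cumExp {n : ℕ} (G : Matrix (Fin n) (Fin n) ℝ) (x : ℝ) : Matrix (Fin n) (Fin n) ℝ :=
  Matrix.of fun i j => ∫ s in (0:ℝ)..x, mexp (s • G) i j

/-- Irreducibility of a square matrix: for all `i ≠ j` there is a path from `i` to `j`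
along nonzero entries. -/
def MatIrr {m : Type*} (A : Matrix m m ℝ) : Prop :=
  ∀ i j : m, i ≠ j → ∃ (r : ℕ) (p : ℕ → m), p 0 = i ∧ p r = j ∧
    ∀ k < r, A (p k) (p (k+1)) ≠ 0

/-- Spectral radius of a real matrix: supremum of the moduli of its complex eigenvalues. -/
def specRad {m : Type*} [Fintype m] [DecidableEq m] (A : Matrix m m ℝ) : ℝ :=
  sSup ((fun z : ℂ => ‖z‖) '' (spectrum ℂ (A.map (algebraMap ℝ ℂ))))

/-- `A` is an M-matrix: `A = s•I − B` with `B ≥ 0` entrywise and `ρ(B) ≤ s`. -/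
def IsMMatrix {m : Type*} [Fintype m] [DecidableEq m] (A : Matrix m m ℝ) : Prop :=
  ∃ (s : ℝ) (B : Matrix m m ℝ), (∀ i j, 0 ≤ B i j) ∧ specRad B ≤ s ∧
    A = s • (1 : Matrix m m ℝ) - B

/-- `A = M − N` is a regular splitting: `M` invertible, `M⁻¹ ≥ 0`, `N ≥ 0`. -/
def RegSplit {n : ℕ} (A M N : Matrix (Fin n) (Fin n) ℝ) : Prop :=
  A = M - N ∧ IsUnit M.det ∧ (∀ i j, 0 ≤ M⁻¹ i j) ∧ (∀ i j, 0 ≤ N i j)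

/-- The complex characteristic roots (eigenvalues with algebraic multiplicity)
of a real matrix. -/
def cRoots {n : ℕ} (Y : Matrix (Fin n) (Fin n) ℝ) : Multiset ℂ :=
  ((Y.map (algebraMap ℝ ℂ)).charpoly).roots

/-- substochastic matrix -/
def Substoch {n : ℕ} (W : Matrix (Fin n) (Fin n) ℝ) : Prop :=
  (∀ i j, 0 ≤ W i j) ∧ ∀ i, ∑ j, W i j ≤ 1

/-- stochastic matrix -/
def StochMat {n : ℕ} (W : Matrix (Fin n) (Fin n) ℝ) : Prop :=
  (∀ i j, 0 ≤ W i j) ∧ ∀ i, ∑ j, W i j = 1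

/-- subgenerator -/
def IsSubGen {n : ℕ} (Y : Matrix (Fin n) (Fin n) ℝ) : Prop :=
  (∀ i j, i ≠ j → 0 ≤ Y i j) ∧ ∀ i, ∑ j, Y i j ≤ 0

/-- generator -/
def IsGen {n : ℕ} (Y : Matrix (Fin n) (Fin n) ℝ) : Prop :=
  (∀ i j, i ≠ j → 0 ≤ Y i j) ∧ ∀ i, ∑ j, Y i j = 0

/-- The data of a Markov-modulated Lévy process: phase generator `Q`, Brownian
drifts `a` and volatilities `s` (denoted `σ` in the paper), Lévy densities `ν`,
phase-change jump densities `μ`, and `U0 = U(0)` (the atoms at 0 of the jump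
distributions). -/
structure Dat (n : ℕ) where
  Q : Matrix (Fin n) (Fin n) ℝ
  a : Fin n → ℝ
  s : Fin n → ℝ
  ν : Fin n → ℝ → ℝ
  μ : Fin n → Fin n → ℝ → ℝ
  U0 : Matrix (Fin n) (Fin n) ℝ

namespace Dat

variable {n : ℕ} (D : Dat n)

/-- The standing assumptions of the paper. -/
structure Good : Prop where
  hn : 1 ≤ n
  hQoff : ∀ i j, i ≠ j → 0 ≤ D.Q i j
  hQrow : ∀ i, ∑ j, D.Q i j = 0
  hQirr : MatIrr D.Q
  hs : ∀ i, 0 < D.s i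
  hνc : ∀ i, ContinuousOn (D.ν i) (Set.Ioi 0)
  hν0 : ∀ i, ∀ x ∈ Set.Ioi (0:ℝ), 0 ≤ D.ν i x
  hνi : ∀ i, IntegrableOn (D.ν i) (Set.Ioi 0)
  hU0d : ∀ i, D.U0 i i = 1
  hU0o : ∀ i j, i ≠ j → D.U0 i j ∈ Set.Icc (0:ℝ) 1
  hμc : ∀ i j, i ≠ j → ContinuousOn (D.μ i j) (Set.Ioi 0)
  hμ0 : ∀ i j, ∀ x ∈ Set.Ioi (0:ℝ), 0 ≤ D.μ i j x
  hμi : ∀ i j, i ≠ j → IntegrableOn (D.μ i j) (Set.Ioi 0)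
  hμU : ∀ i j, i ≠ j → D.U0 i j + ∫ x in Set.Ioi (0:ℝ), D.μ i j x = 1
  hμd : ∀ i x, D.μ i i x = 0

/-- `Δ_a`. -/
def Da : Matrix (Fin n) (Fin n) ℝ := Matrix.diagonal D.a

/-- `Δ_{σ²}`. -/
def Ds : Matrix (Fin n) (Fin n) ℝ := Matrix.diagonal fun i => (D.s i)^2

/-- `Δ_ν(x)`. -/
def Dν (x : ℝ) : Matrix (Fin n) (Fin n) ℝ := Matrix.diagonal fun i => D.ν i x

/-- `Q ∘ μ(x)` (Hadamard product). -/
def Qμ (x : ℝ) : Matrix (Fin n) (Fin n) ℝ := Matrix.of fun i j => D.Q i j * D.μ i j x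

/-- The matrix function `F`. -/
def F (Y : Matrix (Fin n) (Fin n) ℝ) : Matrix (Fin n) (Fin n) ℝ :=
  D.Da * Y + (1/2 : ℝ) • (D.Ds * (Y * Y))
    + intP (fun x => D.Dν x * (mexp (x • Y) - 1))
    + Matrix.hadamard D.Q D.U0
    + intP (fun x => D.Qμ x * mexp (x • Y))

/-- The drift `κ`, relative to the stationary vector `π` of `Q`. -/
def kappa (π : Fin n → ℝ) : ℝ :=
  ∑ i, π i * (D.a i + (∫ x in Set.Ioi (0:ℝ), x * D.ν i x)
    + ∑ j, D.Q i j * ∫ x in Set.Ioi (0:ℝ), x * D.μ i j x)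

/-- `π` is the (positive) stationary probability vector of `Q`. -/
def IsStat (π : Fin n → ℝ) : Prop :=
  (∀ i, 0 < π i) ∧ (∀ j, ∑ i, π i * D.Q i j = 0) ∧ ∑ i, π i = 1

/-- `H(τ, W)`. -/
def H (τ : ℝ) (W : Matrix (Fin n) (Fin n) ℝ) : Matrix (Fin n) (Fin n) ℝ :=
  intP (fun x => D.Dν x * (mexp ((τ⁻¹ * x) • (W - 1)) - 1))

/-- `K(τ, W)`. -/
def K (τ : ℝ) (W : Matrix (Fin n) (Fin n) ℝ) : Matrix (Fin n) (Fin n) ℝ :=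
  Matrix.hadamard D.Q D.U0 + intP (fun x => D.Qμ x * mexp ((τ⁻¹ * x) • (W - 1)))

/-- `B_1`. -/
def B1 : Matrix (Fin n) (Fin n) ℝ := D.Ds

/-- `B_0(τ)`. -/
def B0 (τ : ℝ) : Matrix (Fin n) (Fin n) ℝ := (2*τ) • D.Da - (2:ℝ) • D.Ds

/-- `B_{-1}(τ, W)`. -/
def Bm1 (τ : ℝ) (W : Matrix (Fin n) (Fin n) ℝ) : Matrix (Fin n) (Fin n) ℝ :=
  D.Ds - (2*τ) • D.Da + (2*τ^2) • (D.H τ W + D.K τ W)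

/-- Equation (QW): `B₁W² + B₀(τ)W + B₋₁(τ,W) = 0`. -/
def QW (τ : ℝ) (W : Matrix (Fin n) (Fin n) ℝ) : Prop :=
  D.B1 * (W * W) + D.B0 τ * W + D.Bm1 τ W = 0

/-- `B̃_{-1}(τ, W) = −B₀(τ)⁻¹ B₋₁(τ,W)`. -/
def Btm1 (τ : ℝ) (W : Matrix (Fin n) (Fin n) ℝ) : Matrix (Fin n) (Fin n) ℝ :=
  -(D.B0 τ)⁻¹ * D.Bm1 τ W

/-- `B̃_1(τ) = −B₀(τ)⁻¹ B₁`. -/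
def Bt1 (τ : ℝ) : Matrix (Fin n) (Fin n) ℝ := -(D.B0 τ)⁻¹ * D.B1

/-- `0 < τ < τ*`: `troot i` is the unique positive root `τ_i` of the quadratic
`σ_i² − 2τ a_i + 2τ²(q_ii − ∫_0^∞ ν_i)`, `τ` is positive, `τ < σ_i²/a_i` whenever
`a_i > 0`, and `τ < τ_i` for all `i`. -/
def TauOK (troot : Fin n → ℝ) (τ : ℝ) : Prop :=
  (∀ i, 0 < troot i ∧
      (D.s i)^2 - 2 * troot i * D.a i
        + 2 * (troot i)^2 * (D.Q i i - ∫ x in Set.Ioi (0:ℝ), D.ν i x) = 0 ∧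
      ∀ t > 0, (D.s i)^2 - 2 * t * D.a i
        + 2 * t^2 * (D.Q i i - ∫ x in Set.Ioi (0:ℝ), D.ν i x) = 0 → t = troot i) ∧
  0 < τ ∧ (∀ i, 0 < D.a i → τ < (D.s i)^2 / D.a i) ∧ (∀ i, τ < troot i)

/-- `ρ_i = ∫_0^∞ ν_i`. -/
def rho (i : Fin n) : ℝ := ∫ x in Set.Ioi (0:ℝ), D.ν i x

/-- `λ_i = ρ_i + |q_ii|`. -/
def lam (i : Fin n) : ℝ := D.rho i + |D.Q i i|

/-- `b_i`. -/
def b (i : Fin n) : ℝ := (Real.sqrt ((D.a i)^2 + 2 * D.lam i * (D.s i)^2) + D.a i) / (D.s i)^2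

/-- `c_i`. -/
def c (i : Fin n) : ℝ := D.b i - 2 * D.a i / (D.s i)^2

/-- `Ĉ(X)`. -/
def Chat (X : Matrix (Fin n) (Fin n) ℝ) : Matrix (Fin n) (Fin n) ℝ :=
  Matrix.hadamard (D.Q - Matrix.diagonal fun i => D.Q i i) D.U0
    + intP (fun x => D.Dν x * mexp (x • (X - Matrix.diagonal D.b)))
    + intP (fun x => D.Qμ x * mexp (x • (X - Matrix.diagonal D.b)))

/-- `NARE(W)`: the Riccati equation `S² − Δ_c S − S Δ_b + 2Δ_{σ²}⁻¹ Ĉ(W) = 0` in `S`. -/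
def NARE (W S : Matrix (Fin n) (Fin n) ℝ) : Prop :=
  S * S - Matrix.diagonal D.c * S - S * Matrix.diagonal D.b
    + (2:ℝ) • (Matrix.diagonal (fun i => ((D.s i)^2)⁻¹) * D.Chat W) = 0

/-- `S` is the minimal nonnegative solution of `NARE(W)`. -/
def MinSolNARE (W S : Matrix (Fin n) (Fin n) ℝ) : Prop :=
  (∀ i j, 0 ≤ S i j) ∧ D.NARE W S ∧
    ∀ T, (∀ i j, 0 ≤ T i j) → D.NARE W T → ∀ i j, S i j ≤ T i j

/-- `Λ` (relative to `G`). -/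
def Lam (G : Matrix (Fin n) (Fin n) ℝ) : Matrix (Fin n) (Fin n) ℝ :=
  intP (fun x => D.Dν x * cumExp G x) + intP (fun x => D.Qμ x * cumExp G x)

/-- `Θ = −2Δ_a − Δ_{σ²}G − 2Λ` (relative to `G`). -/
def Theta (G : Matrix (Fin n) (Fin n) ℝ) : Matrix (Fin n) (Fin n) ℝ :=
  (-2 : ℝ) • D.Da - D.Ds * G - (2:ℝ) • D.Lam G

/-- Integrability of the first moments `∫ x ν_i(x) dx`, `∫ x μ_ij(x) dx`. -/
def Moments : Prop :=
  (∀ i, IntegrableOn (fun x => x * D.ν i x) (Set.Ioi (0:ℝ))) ∧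
  (∀ i j, IntegrableOn (fun x => x * D.μ i j x) (Set.Ioi (0:ℝ)))

end Dat

/-! ### Auxiliary lemmas -/

open Nat in
theorem mexp_hasSum {n : ℕ} (A : Matrix (Fin n) (Fin n) ℝ) :
    HasSum (fun k : ℕ => ((k ! : ℝ)⁻¹) • A ^ k) (mexp A) := by
  letI : SeminormedRing (Matrix (Fin n) (Fin n) ℝ) := Matrix.linftyOpSemiNormedRing
  letI : NormedRing (Matrix (Fin n) (Fin n) ℝ) := Matrix.linftyOpNormedRing
  letI : NormedAlgebra ℝ (Matrix (Fin n) (Fin n) ℝ) := Matrix.linftyOpNormedAlgebra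
  exact NormedSpace.exp_series_hasSum_exp' (𝕂 := ℝ) A

open Nat in
theorem mexp_hasSum_entry {n : ℕ} (A : Matrix (Fin n) (Fin n) ℝ) (i j : Fin n) :
    HasSum (fun k : ℕ => ((k ! : ℝ)⁻¹) * ((A ^ k) i j)) (mexp A i j) := by
  have h := mexp_hasSum A
  have h2 := (Pi.hasSum.mp ((Pi.hasSum (f := fun k : ℕ => ((k ! : ℝ)⁻¹) • A ^ k)).mp h i) j)
  simpa [Matrix.smul_apply, smul_eq_mul] using h2

theorem pow_nonneg_entry {n : ℕ} {A : Matrix (Fin n) (Fin n) ℝ} (hA : ∀ i j, 0 ≤ A i j) (k : ℕ) :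
    ∀ i j, 0 ≤ (A ^ k) i j := by
  induction k with
  | zero => intro i j; simp [Matrix.one_apply]; positivity
  | succ k ih =>
    intro i j
    rw [pow_succ, Matrix.mul_apply]
    exact Finset.sum_nonneg fun l _ => mul_nonneg (ih i l) (hA l j)

theorem pow_mono_entry {n : ℕ} {A B : Matrix (Fin n) (Fin n) ℝ} (hA : ∀ i j, 0 ≤ A i j)
    (hAB : ∀ i j, A i j ≤ B i j) (k : ℕ) : ∀ i j, (A ^ k) i j ≤ (B ^ k) i j := by
  induction k with
  | zero => intro i j; simp
  | succ k ih =>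
    intro i j
    rw [pow_succ, pow_succ, Matrix.mul_apply, Matrix.mul_apply]
    refine Finset.sum_le_sum fun l _ => ?_
    exact mul_le_mul (ih i l) (hAB l j) (hA l j) (le_trans (pow_nonneg_entry hA k i l) (ih i l))

theorem pow_rowsum_le {n : ℕ} {A : Matrix (Fin n) (Fin n) ℝ} {c : ℝ} (hc : 0 ≤ c)
    (hA : ∀ i j, 0 ≤ A i j) (hrow : ∀ i, ∑ j, A i j ≤ c) (k : ℕ) :
    ∀ i, ∑ j, (A ^ k) i j ≤ c ^ k := by
  induction k with
  | zero => intro i; simp [Matrix.one_apply]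
  | succ k ih =>
    intro i
    have hps : (A : Matrix (Fin n) (Fin n) ℝ) ^ (k+1) = A ^ k * A := pow_succ A k
    rw [hps]
    calc ∑ j, (A ^ k * A) i j = ∑ j, ∑ l, (A ^ k) i l * A l j := by
          simp [Matrix.mul_apply]
      _ = ∑ l, (A ^ k) i l * ∑ j, A l j := by
          rw [Finset.sum_comm]; simp [Finset.mul_sum]
      _ ≤ ∑ l, (A ^ k) i l * c := by
          refine Finset.sum_le_sum fun l _ => ?_
          exact mul_le_mul_of_nonneg_left (hrow l) (pow_nonneg_entry hA k i l)
      _ = (∑ l, (A ^ k) i l) * c := by rw [Finset.sum_mul]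
      _ ≤ c ^ k * c := mul_le_mul_of_nonneg_right (ih i) hc
      _ = c ^ (k + 1) := (pow_succ c k).symm

theorem mexp_nonneg {n : ℕ} {A : Matrix (Fin n) (Fin n) ℝ} (hA : ∀ i j, 0 ≤ A i j) (i j : Fin n) :
    0 ≤ mexp A i j := by
  refine hasSum_le (fun k => ?_) hasSum_zero (mexp_hasSum_entry A i j)
  exact mul_nonneg (by positivity) (pow_nonneg_entry hA k i j)

theorem mexp_mono {n : ℕ} {A B : Matrix (Fin n) (Fin n) ℝ} (hA : ∀ i j, 0 ≤ A i j)
    (hAB : ∀ i j, A i j ≤ B i j) (i j : Fin n) : mexp A i j ≤ mexp B i j := by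
  refine hasSum_le (fun k => ?_) (mexp_hasSum_entry A i j) (mexp_hasSum_entry B i j)
  exact mul_le_mul_of_nonneg_left (pow_mono_entry hA hAB k i j) (by positivity)

open Nat in
theorem mexp_rowsum_le {n : ℕ} {A : Matrix (Fin n) (Fin n) ℝ} {c : ℝ} (hc : 0 ≤ c)
    (hA : ∀ i j, 0 ≤ A i j) (hrow : ∀ i, ∑ j, A i j ≤ c) (i : Fin n) :
    ∑ j, mexp A i j ≤ Real.exp c := by
  have h1 : HasSum (fun k : ℕ => ((k ! : ℝ)⁻¹) * ∑ j, (A ^ k) i j) (∑ j, mexp A i j) := by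
    have := hasSum_sum (f := fun (j : Fin n) (k : ℕ) => ((k ! : ℝ)⁻¹) * ((A ^ k) i j))
      (s := Finset.univ) (a := fun j => mexp A i j) (fun j _ => mexp_hasSum_entry A i j)
    simpa [Finset.mul_sum] using this
  have h2 : HasSum (fun k : ℕ => ((k ! : ℝ)⁻¹) * c ^ k) (Real.exp c) := by
    have := NormedSpace.exp_series_hasSum_exp' (𝕂 := ℝ) (𝔸 := ℝ) c
    simpa [Real.exp_eq_exp_ℝ, smul_eq_mul] using this
  refine hasSum_le (fun k => ?_) h1 h2
  exact mul_le_mul_of_nonneg_left (pow_rowsum_le hc hA hrow k i) (by positivity)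

open Nat in
theorem mexp_smul_one {n : ℕ} (c : ℝ) :
    mexp (c • (1 : Matrix (Fin n) (Fin n) ℝ)) = Real.exp c • (1 : Matrix (Fin n) (Fin n) ℝ) := by
  ext i j
  have h1 := mexp_hasSum_entry (c • (1 : Matrix (Fin n) (Fin n) ℝ)) i j
  have h2 : HasSum (fun k : ℕ => ((k ! : ℝ)⁻¹) * ((c • (1 : Matrix (Fin n) (Fin n) ℝ)) ^ k) i j)
      ((Real.exp c • (1 : Matrix (Fin n) (Fin n) ℝ)) i j) := by
    have hc : HasSum (fun k : ℕ => ((k ! : ℝ)⁻¹) * c ^ k) (Real.exp c) := by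
      have := NormedSpace.exp_series_hasSum_exp' (𝕂 := ℝ) (𝔸 := ℝ) c
      simpa [Real.exp_eq_exp_ℝ, smul_eq_mul] using this
    have := hc.mul_right ((1 : Matrix (Fin n) (Fin n) ℝ) i j)
    simpa [smul_pow, one_pow, Matrix.smul_apply, smul_eq_mul, mul_assoc] using this
  exact h1.unique h2

theorem mexp_add_smul_one {n : ℕ} (A : Matrix (Fin n) (Fin n) ℝ) (c : ℝ) :
    mexp (A + c • 1) = Real.exp c • mexp A := by
  have hcomm : Commute A (c • (1 : Matrix (Fin n) (Fin n) ℝ)) :=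
    (Commute.one_right A).smul_right c
  have := Matrix.exp_add_of_commute A (c • 1) hcomm
  rw [mexp, this, ← mexp, ← mexp, mexp_smul_one, Matrix.mul_smul, Matrix.mul_one]

theorem mexp_sub_one {n : ℕ} (t : ℝ) (W : Matrix (Fin n) (Fin n) ℝ) :
    mexp (t • (W - 1)) = Real.exp (-t) • mexp (t • W) := by
  have h : t • (W - 1) = t • W + (-t) • (1 : Matrix (Fin n) (Fin n) ℝ) := by
    rw [smul_sub]; rw [neg_smul]; abel
  rw [h, mexp_add_smul_one]

section expP
variable {n : ℕ} {t : ℝ} {W W' : Matrix (Fin n) (Fin n) ℝ}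

theorem smul_entries_nonneg (ht : 0 ≤ t) (hW : ∀ i j, 0 ≤ W i j) :
    ∀ i j, 0 ≤ (t • W) i j := fun i j => by
  simpa [Matrix.smul_apply, smul_eq_mul] using mul_nonneg ht (hW i j)

theorem expP_nonneg (ht : 0 ≤ t) (hW : ∀ i j, 0 ≤ W i j) (i j : Fin n) :
    0 ≤ mexp (t • (W - 1)) i j := by
  rw [mexp_sub_one]
  simpa [Matrix.smul_apply, smul_eq_mul] using
    mul_nonneg (Real.exp_nonneg _) (mexp_nonneg (smul_entries_nonneg ht hW) i j)

theorem expP_rowsum (ht : 0 ≤ t) (hW : ∀ i j, 0 ≤ W i j) (hrow : ∀ i, ∑ j, W i j ≤ 1)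
    (i : Fin n) : ∑ j, mexp (t • (W - 1)) i j ≤ 1 := by
  rw [mexp_sub_one]
  have h1 : ∀ i, ∑ j, (t • W) i j ≤ t := fun i => by
    simp only [Matrix.smul_apply, smul_eq_mul, ← Finset.mul_sum]
    calc t * ∑ j, W i j ≤ t * 1 := mul_le_mul_of_nonneg_left (hrow i) ht
      _ = t := mul_one t
  have h2 := mexp_rowsum_le ht (smul_entries_nonneg ht hW) h1 i
  simp only [Matrix.smul_apply, smul_eq_mul, ← Finset.mul_sum]
  calc Real.exp (-t) * ∑ j, mexp (t • W) i j ≤ Real.exp (-t) * Real.exp t :=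
        mul_le_mul_of_nonneg_left h2 (Real.exp_nonneg _)
    _ = 1 := by rw [← Real.exp_add]; simp

theorem expP_le_one (ht : 0 ≤ t) (hW : ∀ i j, 0 ≤ W i j) (hrow : ∀ i, ∑ j, W i j ≤ 1)
    (i j : Fin n) : mexp (t • (W - 1)) i j ≤ 1 := by
  refine le_trans ?_ (expP_rowsum ht hW hrow i)
  exact Finset.single_le_sum (f := fun j => mexp (t • (W - 1)) i j)
    (fun l _ => expP_nonneg ht hW i l) (Finset.mem_univ j)

theorem expP_mono (ht : 0 ≤ t) (hW : ∀ i j, 0 ≤ W i j) (hWW : ∀ i j, W i j ≤ W' i j)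
    (i j : Fin n) : mexp (t • (W - 1)) i j ≤ mexp (t • (W' - 1)) i j := by
  rw [mexp_sub_one, mexp_sub_one]
  simp only [Matrix.smul_apply, smul_eq_mul]
  refine mul_le_mul_of_nonneg_left ?_ (Real.exp_nonneg _)
  refine mexp_mono (smul_entries_nonneg ht hW) (fun i j => ?_) i j
  simpa [Matrix.smul_apply, smul_eq_mul] using mul_le_mul_of_nonneg_left (hWW i j) ht

end expP

theorem mexp_continuous {n : ℕ} :
    Continuous (mexp : Matrix (Fin n) (Fin n) ℝ → Matrix (Fin n) (Fin n) ℝ) := by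
  letI : SeminormedRing (Matrix (Fin n) (Fin n) ℝ) := Matrix.linftyOpSemiNormedRing
  letI : NormedRing (Matrix (Fin n) (Fin n) ℝ) := Matrix.linftyOpNormedRing
  letI : NormedAlgebra ℝ (Matrix (Fin n) (Fin n) ℝ) := Matrix.linftyOpNormedAlgebra
  letI : NormedAlgebra ℚ (Matrix (Fin n) (Fin n) ℝ) := NormedAlgebra.restrictScalars ℚ ℝ _
  exact NormedSpace.exp_continuous (𝔸 := Matrix (Fin n) (Fin n) ℝ)

theorem continuous_expP_x {n : ℕ} (c : ℝ) (W : Matrix (Fin n) (Fin n) ℝ) (i j : Fin n) :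
    Continuous (fun x : ℝ => mexp ((c * x) • (W - 1)) i j) := by
  have h1 : Continuous (fun x : ℝ => (c * x) • (W - 1)) :=
    ((continuous_const.mul continuous_id).smul continuous_const)
  exact ((mexp_continuous.comp h1).matrix_elem i j)

theorem tendsto_expP_entry {n : ℕ} {c : ℝ} {Wk : ℕ → Matrix (Fin n) (Fin n) ℝ}
    {Wl : Matrix (Fin n) (Fin n) ℝ} (hk : Filter.Tendsto Wk atTop (nhds Wl)) (i j : Fin n) :
    Filter.Tendsto (fun m => mexp (c • (Wk m - 1)) i j) atTop
      (nhds (mexp (c • (Wl - 1)) i j)) := by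
  have h1 : Continuous (fun X : Matrix (Fin n) (Fin n) ℝ => mexp (c • (X - 1)) i j) :=
    (mexp_continuous.comp ((continuous_id.sub continuous_const).const_smul c)).matrix_elem i j
  exact (h1.tendsto Wl).comp hk

theorem quad_pos {σ2 a c tr τ : ℝ} (hσ : 0 < σ2) (hc : c ≤ 0) (htr : 0 < tr)
    (hroot : σ2 - 2 * tr * a + 2 * tr ^ 2 * c = 0) (h1 : 0 < τ) (h2 : τ < tr) :
    0 < σ2 - 2 * τ * a + 2 * τ ^ 2 * c := by
  nlinarith [mul_pos (sub_pos.2 h2) hσ,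
    mul_nonneg (mul_nonneg (mul_nonneg (neg_nonneg.2 hc) h1.le) htr.le) (sub_pos.2 h2).le]
section DatAux
variable {n : ℕ} (D : Dat n)

/-- The substochastic kernel `P(x) = e^{τ⁻¹ x (W−I)}`. -/
def Pm (τ : ℝ) (W : Matrix (Fin n) (Fin n) ℝ) (x : ℝ) : Matrix (Fin n) (Fin n) ℝ :=
  mexp ((τ⁻¹ * x) • (W - 1))

theorem H_apply (τ : ℝ) (W : Matrix (Fin n) (Fin n) ℝ) (i j : Fin n) :
    D.H τ W i j = ∫ x in Set.Ioi (0:ℝ),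
      D.ν i x * (Pm τ W x i j - (1 : Matrix (Fin n) (Fin n) ℝ) i j) := by
  simp only [Dat.H, intP, Matrix.of_apply]
  congr 1
  ext x
  rw [Dat.Dν, Pm, Matrix.diagonal_mul, Matrix.sub_apply]

theorem K_apply (τ : ℝ) (W : Matrix (Fin n) (Fin n) ℝ) (i j : Fin n) :
    D.K τ W i j = Matrix.hadamard D.Q D.U0 i j
      + ∫ x in Set.Ioi (0:ℝ), ∑ k, D.Q i k * D.μ i k x * Pm τ W x k j := by
  simp only [Dat.K, intP, Matrix.add_apply, Matrix.of_apply]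
  have h : ∀ x : ℝ, ((D.Qμ x * mexp ((τ⁻¹ * x) • (W - 1)) : Matrix (Fin n) (Fin n) ℝ)) i j
      = ∑ k, D.Q i k * D.μ i k x * Pm τ W x k j := by
    intro x
    simp [Dat.Qμ, Pm, Matrix.mul_apply]
  simp only [h]

variable {τ : ℝ} {W W' : Matrix (Fin n) (Fin n) ℝ}

theorem one_entry_mem (i j : Fin n) :
    (0:ℝ) ≤ (1 : Matrix (Fin n) (Fin n) ℝ) i j ∧ (1 : Matrix (Fin n) (Fin n) ℝ) i j ≤ 1 := by
  rw [Matrix.one_apply]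
  by_cases h : i = j <;> simp [h]

theorem Pm_smul_nonneg (hτ : 0 < τ) {x : ℝ} (hx : x ∈ Set.Ioi (0:ℝ)) : 0 ≤ τ⁻¹ * x :=
  mul_nonneg (inv_nonneg.2 hτ.le) (le_of_lt hx)

theorem intOn_H_integrand (hG : D.Good) (hτ : 0 < τ) (hW : Substoch W) (i j : Fin n) :
    IntegrableOn
      (fun x => D.ν i x * (Pm τ W x i j - (1 : Matrix (Fin n) (Fin n) ℝ) i j))
      (Set.Ioi (0:ℝ)) := by
  refine Integrable.mono' (hG.hνi i) ?_ ?_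
  · exact ((hG.hνc i).mul (((continuous_expP_x τ⁻¹ W i j).continuousOn).sub
      continuousOn_const)).aestronglyMeasurable measurableSet_Ioi
  · rw [ae_restrict_iff' measurableSet_Ioi]
    filter_upwards with x hx
    have ht := Pm_smul_nonneg hτ hx
    have h0 := expP_nonneg ht hW.1 i j
    have h1 := expP_le_one ht hW.1 hW.2 i j
    have hδ := one_entry_mem (n := n) i j
    rw [Real.norm_eq_abs, abs_mul, abs_of_nonneg (hG.hν0 i x hx)]
    calc D.ν i x * |Pm τ W x i j - (1 : Matrix (Fin n) (Fin n) ℝ) i j|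
        ≤ D.ν i x * 1 := by
          refine mul_le_mul_of_nonneg_left ?_ (hG.hν0 i x hx)
          have hp : Pm τ W x i j = mexp ((τ⁻¹ * x) • (W - 1)) i j := rfl
          rw [abs_le, hp]
          constructor <;> linarith [hδ.1, hδ.2]
      _ = D.ν i x := mul_one _

theorem intOn_K_term (hG : D.Good) (hτ : 0 < τ) (hW : Substoch W) (i j k : Fin n) :
    IntegrableOn (fun x => D.Q i k * D.μ i k x * Pm τ W x k j) (Set.Ioi (0:ℝ)) := by
  by_cases hik : k = i
  · subst hik
    have : (fun x => D.Q k k * D.μ k k x * Pm τ W x k j) = fun _ => (0:ℝ) := by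
      funext x; rw [hG.hμd]; ring
    rw [this]
    exact integrable_zero _ _ _
  · have hik' : i ≠ k := fun h => hik h.symm
    refine Integrable.mono' ((hG.hμi i k hik').const_mul (D.Q i k)) ?_ ?_
    · exact ((continuousOn_const.mul (hG.hμc i k hik')).mul
        ((continuous_expP_x τ⁻¹ W k j).continuousOn)).aestronglyMeasurable measurableSet_Ioi
    · rw [ae_restrict_iff' measurableSet_Ioi]
      filter_upwards with x hx
      have ht := Pm_smul_nonneg hτ hx
      have h0 := expP_nonneg ht hW.1 k j
      have h1 := expP_le_one ht hW.1 hW.2 k j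
      have hQ : 0 ≤ D.Q i k := hG.hQoff i k hik'
      have hμ : 0 ≤ D.μ i k x := hG.hμ0 i k x hx
      rw [Real.norm_eq_abs, abs_of_nonneg (by positivity)]
      calc D.Q i k * D.μ i k x * Pm τ W x k j ≤ D.Q i k * D.μ i k x * 1 := by
            exact mul_le_mul_of_nonneg_left h1 (by positivity)
        _ = D.Q i k * D.μ i k x := mul_one _

theorem intOn_K_integrand (hG : D.Good) (hτ : 0 < τ) (hW : Substoch W) (i j : Fin n) :
    IntegrableOn (fun x => ∑ k, D.Q i k * D.μ i k x * Pm τ W x k j) (Set.Ioi (0:ℝ)) := by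
  exact integrable_finset_sum _ fun k _ => intOn_K_term D hG hτ hW i j k

end DatAux
section HKfacts
variable {n : ℕ} {D : Dat n} {τ : ℝ} {W W' : Matrix (Fin n) (Fin n) ℝ}

theorem sum_one_row (i : Fin n) : ∑ j, (1 : Matrix (Fin n) (Fin n) ℝ) i j = 1 := by
  simp [Matrix.one_apply]

theorem H_offdiag_nonneg (hG : D.Good) (hτ : 0 < τ) (hW : Substoch W) {i j : Fin n}
    (hij : i ≠ j) : 0 ≤ D.H τ W i j := by
  rw [H_apply]
  refine setIntegral_nonneg measurableSet_Ioi fun x hx => ?_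
  rw [Matrix.one_apply_ne hij, sub_zero]
  exact mul_nonneg (hG.hν0 i x hx) (expP_nonneg (Pm_smul_nonneg hτ hx) hW.1 i j)

theorem H_diag_ge (hG : D.Good) (hτ : 0 < τ) (hW : Substoch W) (i : Fin n) :
    -(∫ x in Set.Ioi (0:ℝ), D.ν i x) ≤ D.H τ W i i := by
  rw [H_apply, ← MeasureTheory.integral_neg]
  refine setIntegral_mono_on ((hG.hνi i).neg) (intOn_H_integrand D hG hτ hW i i)
    measurableSet_Ioi fun x hx => ?_
  have hP := expP_nonneg (Pm_smul_nonneg hτ hx) hW.1 i i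
  have hν := hG.hν0 i x hx
  rw [Matrix.one_apply_eq]
  have hPm : (0:ℝ) ≤ Pm τ W x i i := hP
  nlinarith [mul_nonneg hν hPm]

theorem H_rowsum_le (hG : D.Good) (hτ : 0 < τ) (hW : Substoch W) (i : Fin n) :
    ∑ j, D.H τ W i j ≤ 0 := by
  simp only [H_apply]
  rw [← integral_finset_sum _ (fun j _ => intOn_H_integrand D hG hτ hW i j)]
  refine setIntegral_nonpos measurableSet_Ioi fun x hx => ?_
  have hsum : ∑ j, D.ν i x * (Pm τ W x i j - (1 : Matrix (Fin n) (Fin n) ℝ) i j)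
      = D.ν i x * ((∑ j, Pm τ W x i j) - 1) := by
    rw [← Finset.mul_sum]
    congr 1
    rw [Finset.sum_sub_distrib, sum_one_row]
  rw [hsum]
  have hrow := expP_rowsum (Pm_smul_nonneg hτ hx) hW.1 hW.2 i
  exact mul_nonpos_of_nonneg_of_nonpos (hG.hν0 i x hx) (by simpa [Pm] using sub_nonpos.2 hrow)

theorem H_mono (hG : D.Good) (hτ : 0 < τ) (hW : Substoch W) (hW' : Substoch W')
    (hle : ∀ i j, W i j ≤ W' i j) (i j : Fin n) : D.H τ W i j ≤ D.H τ W' i j := by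
  rw [H_apply, H_apply]
  refine setIntegral_mono_on (intOn_H_integrand D hG hτ hW i j)
    (intOn_H_integrand D hG hτ hW' i j) measurableSet_Ioi fun x hx => ?_
  have := expP_mono (Pm_smul_nonneg hτ hx) hW.1 hle i j
  have hν := hG.hν0 i x hx
  unfold Pm
  nlinarith

theorem H_tendsto (hG : D.Good) (hτ : 0 < τ) {Wk : ℕ → Matrix (Fin n) (Fin n) ℝ}
    {Wl : Matrix (Fin n) (Fin n) ℝ} (hsub : ∀ m, Substoch (Wk m))
    (hlim : Filter.Tendsto Wk atTop (nhds Wl)) (i j : Fin n) :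
    Filter.Tendsto (fun m => D.H τ (Wk m) i j) atTop (nhds (D.H τ Wl i j)) := by
  simp only [H_apply]
  refine MeasureTheory.tendsto_integral_of_dominated_convergence (fun x => D.ν i x)
    (fun m => ?_) (hG.hνi i) (fun m => ?_) ?_
  · exact ((hG.hνc i).mul (((continuous_expP_x τ⁻¹ (Wk m) i j).continuousOn).sub
      continuousOn_const)).aestronglyMeasurable measurableSet_Ioi
  · rw [ae_restrict_iff' measurableSet_Ioi]
    filter_upwards with x hx
    have ht := Pm_smul_nonneg hτ hx
    have h0 := expP_nonneg ht (hsub m).1 i j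
    have h1 := expP_le_one ht (hsub m).1 (hsub m).2 i j
    have hδ := one_entry_mem (n := n) i j
    rw [Real.norm_eq_abs, abs_mul, abs_of_nonneg (hG.hν0 i x hx)]
    have hp : Pm τ (Wk m) x i j = mexp ((τ⁻¹ * x) • (Wk m - 1)) i j := rfl
    calc D.ν i x * |Pm τ (Wk m) x i j - (1 : Matrix (Fin n) (Fin n) ℝ) i j|
        ≤ D.ν i x * 1 := by
          refine mul_le_mul_of_nonneg_left ?_ (hG.hν0 i x hx)
          rw [abs_le, hp]
          constructor <;> linarith [hδ.1, hδ.2]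
      _ = D.ν i x := mul_one _
  · rw [ae_restrict_iff' measurableSet_Ioi]
    filter_upwards with x hx
    exact Filter.Tendsto.const_mul _ ((tendsto_expP_entry hlim i j).sub tendsto_const_nhds)

theorem K_integral_nonneg (hG : D.Good) (hτ : 0 < τ) (hW : Substoch W) (i j : Fin n) :
    0 ≤ ∫ x in Set.Ioi (0:ℝ), ∑ k, D.Q i k * D.μ i k x * Pm τ W x k j := by
  refine setIntegral_nonneg measurableSet_Ioi fun x hx => ?_
  refine Finset.sum_nonneg fun k _ => ?_
  by_cases hik : k = i
  · subst hik; rw [hG.hμd]; simp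
  · exact mul_nonneg (mul_nonneg (hG.hQoff i k fun h => hik h.symm) (hG.hμ0 i k x hx))
      (expP_nonneg (Pm_smul_nonneg hτ hx) hW.1 k j)

theorem K_offdiag_nonneg (hG : D.Good) (hτ : 0 < τ) (hW : Substoch W) {i j : Fin n}
    (hij : i ≠ j) : 0 ≤ D.K τ W i j := by
  rw [K_apply]
  have h1 : 0 ≤ Matrix.hadamard D.Q D.U0 i j :=
    mul_nonneg (hG.hQoff i j hij) (hG.hU0o i j hij).1
  linarith [K_integral_nonneg hG hτ hW i j]

theorem K_diag_ge (hG : D.Good) (hτ : 0 < τ) (hW : Substoch W) (i : Fin n) :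
    D.Q i i ≤ D.K τ W i i := by
  rw [K_apply]
  have h1 : Matrix.hadamard D.Q D.U0 i i = D.Q i i := by
    rw [Matrix.hadamard_apply, hG.hU0d, mul_one]
  rw [h1]
  linarith [K_integral_nonneg hG hτ hW i i]

theorem K_mono (hG : D.Good) (hτ : 0 < τ) (hW : Substoch W) (hW' : Substoch W')
    (hle : ∀ i j, W i j ≤ W' i j) (i j : Fin n) : D.K τ W i j ≤ D.K τ W' i j := by
  rw [K_apply, K_apply]
  refine add_le_add (le_refl _) ?_
  refine setIntegral_mono_on (intOn_K_integrand D hG hτ hW i j)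
    (intOn_K_integrand D hG hτ hW' i j) measurableSet_Ioi fun x hx => ?_
  refine Finset.sum_le_sum fun k _ => ?_
  by_cases hik : k = i
  · subst hik; rw [hG.hμd]; simp
  · refine mul_le_mul_of_nonneg_left ?_
      (mul_nonneg (hG.hQoff i k fun h => hik h.symm) (hG.hμ0 i k x hx))
    exact expP_mono (Pm_smul_nonneg hτ hx) hW.1 hle k j

theorem integral_mu_eq (hG : D.Good) {i k : Fin n} (hik : i ≠ k) :
    ∫ x in Set.Ioi (0:ℝ), D.μ i k x = 1 - D.U0 i k := by
  have := hG.hμU i k hik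
  linarith

theorem K_rowsum_le (hG : D.Good) (hτ : 0 < τ) (hW : Substoch W) (i : Fin n) :
    ∑ j, D.K τ W i j ≤ 0 := by
  simp only [K_apply]
  rw [Finset.sum_add_distrib]
  rw [← integral_finset_sum _ (fun j _ => intOn_K_integrand D hG hτ hW i j)]
  have hIle : (∫ x in Set.Ioi (0:ℝ), ∑ j, ∑ k, D.Q i k * D.μ i k x * Pm τ W x k j)
      ≤ ∫ x in Set.Ioi (0:ℝ), ∑ k, D.Q i k * D.μ i k x := by
    refine setIntegral_mono_on
      (integrable_finset_sum _ (fun j _ => intOn_K_integrand D hG hτ hW i j))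
      (integrable_finset_sum _ (fun k _ => ?_)) measurableSet_Ioi fun x hx => ?_
    · by_cases hik : k = i
      · subst hik
        have : (fun x => D.Q k k * D.μ k k x) = fun _ => (0:ℝ) := by
          funext x; rw [hG.hμd]; ring
        rw [this]; exact integrable_zero _ _ _
      · exact (hG.hμi i k fun h => hik h.symm).const_mul _
    · rw [Finset.sum_comm]
      refine Finset.sum_le_sum fun k _ => ?_
      by_cases hik : k = i
      · subst hik; rw [hG.hμd]; simp
      · have hq : 0 ≤ D.Q i k * D.μ i k x :=
          mul_nonneg (hG.hQoff i k fun h => hik h.symm) (hG.hμ0 i k x hx)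
        have hrow := expP_rowsum (Pm_smul_nonneg hτ hx) hW.1 hW.2 k
        calc ∑ j, D.Q i k * D.μ i k x * Pm τ W x k j
            = D.Q i k * D.μ i k x * ∑ j, Pm τ W x k j := by rw [Finset.mul_sum]
          _ ≤ D.Q i k * D.μ i k x * 1 := mul_le_mul_of_nonneg_left (by simpa [Pm] using hrow) hq
          _ = D.Q i k * D.μ i k x := mul_one _
  have hIeq : (∫ x in Set.Ioi (0:ℝ), ∑ k, D.Q i k * D.μ i k x)
      = ∑ k, D.Q i k * (if k = i then 0 else 1 - D.U0 i k) := by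
    rw [integral_finset_sum _ (fun k _ => ?_)]
    · refine Finset.sum_congr rfl fun k _ => ?_
      by_cases hik : k = i
      · subst hik
        simp only [if_pos rfl, mul_zero]
        have : (fun x => D.Q k k * D.μ k k x) = fun _ => (0:ℝ) := by
          funext x; rw [hG.hμd]; ring
        rw [this]; simp
      · rw [if_neg hik, MeasureTheory.integral_const_mul, integral_mu_eq hG fun h => hik h.symm]
    · by_cases hik : k = i
      · subst hik
        have : (fun x => D.Q k k * D.μ k k x) = fun _ => (0:ℝ) := by
          funext x; rw [hG.hμd]; ring
        rw [this]; exact integrable_zero _ _ _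
      · exact (hG.hμi i k fun h => hik h.symm).const_mul _
  have halg : (∑ j, Matrix.hadamard D.Q D.U0 i j)
      + ∑ k, D.Q i k * (if k = i then 0 else 1 - D.U0 i k) = 0 := by
    have : (∑ j, Matrix.hadamard D.Q D.U0 i j)
        + ∑ k, D.Q i k * (if k = i then 0 else 1 - D.U0 i k)
        = ∑ k, (D.Q i k * D.U0 i k + D.Q i k * (if k = i then 0 else 1 - D.U0 i k)) := by
      rw [← Finset.sum_add_distrib]
      refine Finset.sum_congr rfl fun k _ => ?_
      rw [Matrix.hadamard_apply]
    rw [this]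
    have h2 : ∀ k, D.Q i k * D.U0 i k + D.Q i k * (if k = i then 0 else 1 - D.U0 i k)
        = D.Q i k := by
      intro k
      by_cases hik : k = i
      · subst hik; rw [if_pos rfl, hG.hU0d]; ring
      · rw [if_neg hik]; ring
    rw [Finset.sum_congr rfl fun k _ => h2 k]
    exact hG.hQrow i
  linarith

theorem K_tendsto (hG : D.Good) (hτ : 0 < τ) {Wk : ℕ → Matrix (Fin n) (Fin n) ℝ}
    {Wl : Matrix (Fin n) (Fin n) ℝ} (hsub : ∀ m, Substoch (Wk m))
    (hlim : Filter.Tendsto Wk atTop (nhds Wl)) (i j : Fin n) :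
    Filter.Tendsto (fun m => D.K τ (Wk m) i j) atTop (nhds (D.K τ Wl i j)) := by
  simp only [K_apply]
  refine Filter.Tendsto.const_add _ ?_
  refine MeasureTheory.tendsto_integral_of_dominated_convergence
    (fun x => ∑ k, |D.Q i k| * D.μ i k x) (fun m => ?_) ?_ (fun m => ?_) ?_
  · exact (intOn_K_integrand D hG hτ (hsub m) i j).aestronglyMeasurable
  · refine integrable_finset_sum _ fun k _ => ?_
    by_cases hik : k = i
    · subst hik
      have : (fun x => |D.Q k k| * D.μ k k x) = fun _ => (0:ℝ) := by
        funext x; rw [hG.hμd]; ring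
      rw [this]; exact integrable_zero _ _ _
    · exact (hG.hμi i k fun h => hik h.symm).const_mul _
  · rw [ae_restrict_iff' measurableSet_Ioi]
    filter_upwards with x hx
    have ht := Pm_smul_nonneg hτ hx
    rw [Real.norm_eq_abs]
    calc |∑ k, D.Q i k * D.μ i k x * Pm τ (Wk m) x k j|
        ≤ ∑ k, |D.Q i k * D.μ i k x * Pm τ (Wk m) x k j| := Finset.abs_sum_le_sum_abs _ _
      _ ≤ ∑ k, |D.Q i k| * D.μ i k x := by
          refine Finset.sum_le_sum fun k _ => ?_
          have hpm : |Pm τ (Wk m) x k j| = Pm τ (Wk m) x k j :=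
            abs_of_nonneg (expP_nonneg ht (hsub m).1 k j)
          rw [abs_mul, abs_mul, abs_of_nonneg (hG.hμ0 i k x hx), hpm]
          calc |D.Q i k| * D.μ i k x * Pm τ (Wk m) x k j
              ≤ |D.Q i k| * D.μ i k x * 1 := by
                exact mul_le_mul_of_nonneg_left
                  (expP_le_one ht (hsub m).1 (hsub m).2 k j)
                  (mul_nonneg (abs_nonneg _) (hG.hμ0 i k x hx))
            _ = |D.Q i k| * D.μ i k x := mul_one _
  · rw [ae_restrict_iff' measurableSet_Ioi]
    filter_upwards with x hx
    refine tendsto_finset_sum _ fun k _ => ?_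
    exact Filter.Tendsto.const_mul _ (tendsto_expP_entry hlim k j)

end HKfacts
section Bm1facts
variable {n : ℕ} {D : Dat n} {troot : Fin n → ℝ} {τ : ℝ} {W W' : Matrix (Fin n) (Fin n) ℝ}

theorem sum_diagonal_row (v : Fin n → ℝ) (i : Fin n) : ∑ j, Matrix.diagonal v i j = v i := by
  simp [Matrix.diagonal_apply]

theorem Qdiag_nonpos (hG : D.Good) (i : Fin n) : D.Q i i ≤ 0 := by
  have h := hG.hQrow i
  have h2 : ∑ j ∈ Finset.univ.erase i, D.Q i j + D.Q i i = ∑ j, D.Q i j :=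
    Finset.sum_erase_add _ _ (Finset.mem_univ i)
  have h3 : 0 ≤ ∑ j ∈ Finset.univ.erase i, D.Q i j :=
    Finset.sum_nonneg fun j hj => hG.hQoff i j (Finset.ne_of_mem_erase hj).symm
  linarith

theorem rho_nonneg (hG : D.Good) (i : Fin n) : 0 ≤ ∫ x in Set.Ioi (0:ℝ), D.ν i x :=
  setIntegral_nonneg measurableSet_Ioi fun x hx => hG.hν0 i x hx

theorem Bm1_apply (τ : ℝ) (W : Matrix (Fin n) (Fin n) ℝ) (i j : Fin n) :
    D.Bm1 τ W i j = D.Ds i j - (2*τ) * D.Da i j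
      + (2*τ^2) * (D.H τ W i j + D.K τ W i j) := by
  simp [Dat.Bm1, Matrix.sub_apply, Matrix.add_apply, Matrix.smul_apply, smul_eq_mul]
  ring

theorem Bm1_nonneg (hG : D.Good) (hT : D.TauOK troot τ) (hW : Substoch W) (i j : Fin n) :
    0 ≤ D.Bm1 τ W i j := by
  have hτ0 : 0 < τ := hT.2.1
  rw [Bm1_apply]
  by_cases hij : i = j
  · subst hij
    rw [Dat.Ds, Dat.Da, Matrix.diagonal_apply_eq, Matrix.diagonal_apply_eq]
    have hH := H_diag_ge hG hτ0 hW i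
    have hK := K_diag_ge hG hτ0 hW i
    have hc : D.Q i i - (∫ x in Set.Ioi (0:ℝ), D.ν i x) ≤ 0 := by
      linarith [Qdiag_nonpos hG i, rho_nonneg hG i]
    have hq := quad_pos (σ2 := (D.s i)^2) (a := D.a i)
      (c := D.Q i i - ∫ x in Set.Ioi (0:ℝ), D.ν i x) (tr := troot i) (τ := τ)
      (pow_pos (hG.hs i) 2) hc (hT.1 i).1 ?_ hτ0 (hT.2.2.2 i)
    · nlinarith [sq_nonneg τ]
    · have := (hT.1 i).2.1
      linarith [this]
  · rw [Dat.Ds, Dat.Da, Matrix.diagonal_apply_ne _ hij, Matrix.diagonal_apply_ne _ hij]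
    have hH := H_offdiag_nonneg hG hτ0 hW hij
    have hK := K_offdiag_nonneg hG hτ0 hW hij
    nlinarith [sq_nonneg τ]

theorem Bm1_rowsum (hG : D.Good) (hτ0 : 0 < τ) (hW : Substoch W) (i : Fin n) :
    ∑ j, D.Bm1 τ W i j ≤ (D.s i)^2 - 2*τ*D.a i := by
  simp only [Bm1_apply]
  rw [Finset.sum_add_distrib, Finset.sum_sub_distrib]
  have h1 : ∑ j, D.Ds i j = (D.s i)^2 := sum_diagonal_row _ i
  have h2 : ∑ j, (2*τ) * D.Da i j = 2*τ*D.a i := by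
    rw [← Finset.mul_sum, Dat.Da, sum_diagonal_row]
  have h3 : ∑ j, (2*τ^2) * (D.H τ W i j + D.K τ W i j) ≤ 0 := by
    rw [← Finset.mul_sum]
    refine mul_nonpos_of_nonneg_of_nonpos (by positivity) ?_
    rw [Finset.sum_add_distrib]
    linarith [H_rowsum_le hG hτ0 hW i, K_rowsum_le hG hτ0 hW i]
  rw [h1, h2]
  linarith

theorem Bm1_mono (hG : D.Good) (hτ0 : 0 < τ) (hW : Substoch W) (hW' : Substoch W')
    (hle : ∀ i j, W i j ≤ W' i j) (i j : Fin n) : D.Bm1 τ W i j ≤ D.Bm1 τ W' i j := by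
  rw [Bm1_apply, Bm1_apply]
  have := H_mono hG hτ0 hW hW' hle i j
  have := K_mono hG hτ0 hW hW' hle i j
  nlinarith [sq_nonneg τ]

theorem Bm1_tendsto (hG : D.Good) (hτ0 : 0 < τ) {Wk : ℕ → Matrix (Fin n) (Fin n) ℝ}
    {Wl : Matrix (Fin n) (Fin n) ℝ} (hsub : ∀ m, Substoch (Wk m))
    (hlim : Filter.Tendsto Wk atTop (nhds Wl)) (i j : Fin n) :
    Filter.Tendsto (fun m => D.Bm1 τ (Wk m) i j) atTop (nhds (D.Bm1 τ Wl i j)) := by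
  simp only [Bm1_apply]
  exact Filter.Tendsto.const_add _ (((H_tendsto hG hτ0 hsub hlim i j).add
    (K_tendsto hG hτ0 hsub hlim i j)).const_mul _)

/-- the positive diagonal of `−B₀(τ)`. -/
theorem dd_pos (hT : D.TauOK troot τ) (hG : D.Good) (i : Fin n) :
    0 < 2*(D.s i)^2 - 2*τ*D.a i := by
  have hs := hG.hs i
  by_cases ha : 0 < D.a i
  · have := hT.2.2.1 i ha
    have h2 : τ * D.a i < (D.s i)^2 := by
      rw [lt_div_iff₀ ha] at this
      linarith
    nlinarith
  · push_neg at ha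
    have : τ * D.a i ≤ 0 := mul_nonpos_of_nonneg_of_nonpos hT.2.1.le ha
    nlinarith

theorem B0_eq : D.B0 τ = Matrix.diagonal (fun i => 2*τ*D.a i - 2*(D.s i)^2) := by
  ext i j
  by_cases hij : i = j
  · subst hij
    simp [Dat.B0, Dat.Da, Dat.Ds, Matrix.sub_apply, Matrix.smul_apply, smul_eq_mul,
      Matrix.diagonal_apply_eq]
  · simp [Dat.B0, Dat.Da, Dat.Ds, Matrix.sub_apply, Matrix.smul_apply, smul_eq_mul,
      Matrix.diagonal_apply_ne _ hij]

theorem negB0inv_eq (hT : D.TauOK troot τ) (hG : D.Good) :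
    -(D.B0 τ)⁻¹ = Matrix.diagonal (fun i => (2*(D.s i)^2 - 2*τ*D.a i)⁻¹) := by
  have hinv : (D.B0 τ)⁻¹ = Matrix.diagonal (fun i => (2*τ*D.a i - 2*(D.s i)^2)⁻¹) := by
    refine Matrix.inv_eq_right_inv ?_
    rw [B0_eq, Matrix.diagonal_mul_diagonal]
    have : ∀ i, (2*τ*D.a i - 2*(D.s i)^2) * (2*τ*D.a i - 2*(D.s i)^2)⁻¹ = 1 := by
      intro i
      have hd := dd_pos hT hG i
      rw [mul_inv_cancel₀ (by linarith)]
    simp only [this]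
    exact Matrix.diagonal_one
  rw [hinv]
  ext i j
  by_cases hij : i = j
  · subst hij
    rw [Matrix.neg_apply, Matrix.diagonal_apply_eq, Matrix.diagonal_apply_eq, ← inv_neg]
    norm_num
  · rw [Matrix.neg_apply, Matrix.diagonal_apply_ne _ hij, Matrix.diagonal_apply_ne _ hij, neg_zero]

/-- entrywise formula for the iteration map. -/
theorem Fmap_apply (hT : D.TauOK troot τ) (hG : D.Good) (X : Matrix (Fin n) (Fin n) ℝ)
    (i j : Fin n) :
    (D.Btm1 τ X + D.Bt1 τ * (X * X)) i j
      = (2*(D.s i)^2 - 2*τ*D.a i)⁻¹ * (D.Bm1 τ X i j + (D.s i)^2 * ((X * X) i j)) := by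
  have hneg := negB0inv_eq hT hG
  rw [Matrix.add_apply, Dat.Btm1, Dat.Bt1, Matrix.mul_assoc, hneg, Matrix.diagonal_mul,
    Matrix.diagonal_mul]
  have hDs : (D.B1 * (X * X)) i j = (D.s i)^2 * ((X * X) i j) := by
    rw [Dat.B1, Dat.Ds, Matrix.diagonal_mul]
  rw [hDs]
  ring

theorem B0_mul_apply (X : Matrix (Fin n) (Fin n) ℝ) (i j : Fin n) :
    (D.B0 τ * X) i j = (2*τ*D.a i - 2*(D.s i)^2) * X i j := by
  rw [B0_eq, Matrix.diagonal_mul]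

theorem B1_mul_apply (X : Matrix (Fin n) (Fin n) ℝ) (i j : Fin n) :
    (D.B1 * X) i j = (D.s i)^2 * X i j := by
  rw [Dat.B1, Dat.Ds, Matrix.diagonal_mul]

/-- (QW) is equivalent to being a fixed point of the iteration map. -/
theorem QW_iff_fixed (hT : D.TauOK troot τ) (hG : D.Good) (X : Matrix (Fin n) (Fin n) ℝ) :
    D.QW τ X ↔ X = D.Btm1 τ X + D.Bt1 τ * (X * X) := by
  constructor
  · intro h
    ext i j
    have h0 : (D.B1 * (X * X) + D.B0 τ * X + D.Bm1 τ X) i j = 0 := by rw [h]; rfl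
    rw [Matrix.add_apply, Matrix.add_apply, B0_mul_apply, B1_mul_apply] at h0
    rw [Fmap_apply hT hG]
    have hd := dd_pos hT hG i
    rw [eq_inv_mul_iff_mul_eq₀ hd.ne']
    linear_combination -h0
  · intro h
    ext i j
    have h0 : X i j = (2*(D.s i)^2 - 2*τ*D.a i)⁻¹ * (D.Bm1 τ X i j + (D.s i)^2 * ((X * X) i j)) := by
      conv_lhs => rw [h]
      rw [Fmap_apply hT hG]
    have hd := dd_pos hT hG i
    have h1 : (2*(D.s i)^2 - 2*τ*D.a i) * X i j
        = D.Bm1 τ X i j + (D.s i)^2 * ((X * X) i j) := by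
      rw [h0]
      rw [← mul_assoc, mul_inv_cancel₀ hd.ne', one_mul]
    rw [Matrix.add_apply, Matrix.add_apply, B0_mul_apply, B1_mul_apply, Matrix.zero_apply]
    linarith

theorem mul_nonneg_entry {X Y : Matrix (Fin n) (Fin n) ℝ} (hX : ∀ i j, 0 ≤ X i j)
    (hY : ∀ i j, 0 ≤ Y i j) (i j : Fin n) : 0 ≤ (X * Y) i j := by
  rw [Matrix.mul_apply]
  exact Finset.sum_nonneg fun k _ => mul_nonneg (hX i k) (hY k j)

theorem mul_rowsum_le {X Y : Matrix (Fin n) (Fin n) ℝ} (hX : Substoch X) (hY : Substoch Y)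
    (i : Fin n) : ∑ j, (X * Y) i j ≤ 1 := by
  calc ∑ j, (X * Y) i j = ∑ k, X i k * ∑ j, Y k j := by
        simp only [Matrix.mul_apply]
        rw [Finset.sum_comm]
        simp [Finset.mul_sum]
    _ ≤ ∑ k, X i k * 1 := Finset.sum_le_sum fun k _ =>
        mul_le_mul_of_nonneg_left (hY.2 k) (hX.1 i k)
    _ = ∑ k, X i k := by simp
    _ ≤ 1 := hX.2 i

theorem mul_mono_entry {X Y X' Y' : Matrix (Fin n) (Fin n) ℝ} (hX : ∀ i j, 0 ≤ X i j)
    (hY : ∀ i j, 0 ≤ Y i j) (hXX : ∀ i j, X i j ≤ X' i j) (hYY : ∀ i j, Y i j ≤ Y' i j)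
    (i j : Fin n) : (X * Y) i j ≤ (X' * Y') i j := by
  rw [Matrix.mul_apply, Matrix.mul_apply]
  refine Finset.sum_le_sum fun k _ => ?_
  exact mul_le_mul (hXX i k) (hYY k j) (hY k j) (le_trans (hX i k) (hXX i k))

end Bm1facts
section Fmapfacts
variable {n : ℕ} {D : Dat n} {troot : Fin n → ℝ} {τ : ℝ}

/-- The fixed-point iteration map. -/
def Fmap (D : Dat n) (τ : ℝ) (X : Matrix (Fin n) (Fin n) ℝ) : Matrix (Fin n) (Fin n) ℝ :=
  D.Btm1 τ X + D.Bt1 τ * (X * X)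

theorem Fmap_apply' (hT : D.TauOK troot τ) (hG : D.Good) (X : Matrix (Fin n) (Fin n) ℝ)
    (i j : Fin n) :
    Fmap D τ X i j
      = (2*(D.s i)^2 - 2*τ*D.a i)⁻¹ * (D.Bm1 τ X i j + (D.s i)^2 * ((X * X) i j)) :=
  Fmap_apply hT hG X i j

theorem Fmap_sub (hT : D.TauOK troot τ) (hG : D.Good) {X : Matrix (Fin n) (Fin n) ℝ}
    (hX : Substoch X) : Substoch (Fmap D τ X) := by
  have hτ0 : 0 < τ := hT.2.1
  have hddpos := dd_pos hT hG
  constructor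
  · intro i j
    rw [Fmap_apply' hT hG X i j]
    exact mul_nonneg (inv_nonneg.2 (hddpos i).le)
      (add_nonneg (Bm1_nonneg hG hT hX i j)
        (mul_nonneg (sq_nonneg _) (mul_nonneg_entry hX.1 hX.1 i j)))
  · intro i
    have hcalc : ∑ j, Fmap D τ X i j
        = (2*(D.s i)^2 - 2*τ*D.a i)⁻¹ * (∑ j, D.Bm1 τ X i j + (D.s i)^2 * ∑ j, (X * X) i j) := by
      simp only [Fmap_apply' hT hG X]
      rw [← Finset.mul_sum, Finset.sum_add_distrib, ← Finset.mul_sum]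
    rw [hcalc]
    have h1 := Bm1_rowsum hG hτ0 hX i
    have h2 := mul_rowsum_le hX hX i
    have h3 : ∑ j, D.Bm1 τ X i j + (D.s i)^2 * ∑ j, (X * X) i j
        ≤ 2*(D.s i)^2 - 2*τ*D.a i := by nlinarith [sq_nonneg (D.s i)]
    calc (2*(D.s i)^2 - 2*τ*D.a i)⁻¹ * (∑ j, D.Bm1 τ X i j + (D.s i)^2 * ∑ j, (X * X) i j)
        ≤ (2*(D.s i)^2 - 2*τ*D.a i)⁻¹ * (2*(D.s i)^2 - 2*τ*D.a i) :=
          mul_le_mul_of_nonneg_left h3 (inv_nonneg.2 (hddpos i).le)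
      _ = 1 := inv_mul_cancel₀ (hddpos i).ne'

theorem Fmap_mono (hT : D.TauOK troot τ) (hG : D.Good) {X Y : Matrix (Fin n) (Fin n) ℝ}
    (hX : Substoch X) (hY : Substoch Y) (hle : ∀ i j, X i j ≤ Y i j) (i j : Fin n) :
    Fmap D τ X i j ≤ Fmap D τ Y i j := by
  have hτ0 : 0 < τ := hT.2.1
  have hddpos := dd_pos hT hG
  rw [Fmap_apply' hT hG X i j, Fmap_apply' hT hG Y i j]
  refine mul_le_mul_of_nonneg_left ?_ (inv_nonneg.2 (hddpos i).le)
  refine add_le_add (Bm1_mono hG hτ0 hX hY hle i j) ?_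
  exact mul_le_mul_of_nonneg_left (mul_mono_entry hX.1 hX.1 hle hle i j) (sq_nonneg _)

end Fmapfacts
/-- Theorem 6 of the paper: monotone convergence of the natural
fixed-point iteration to the minimal substochastic solution of (QW). -/
theorem stmt6 {n : ℕ} (D : Dat n) (hD : D.Good) (troot : Fin n → ℝ) (τ : ℝ)
    (hτ : D.TauOK troot τ) (W : ℕ → Matrix (Fin n) (Fin n) ℝ) (hW0 : W 0 = 0)
    (hWrec : ∀ k, W (k+1) = D.Btm1 τ (W k) + D.Bt1 τ * (W k * W k)) :
    (∀ k, (∀ i j, 0 ≤ W k i j) ∧ (∀ i j, W k i j ≤ W (k+1) i j) ∧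
      (∀ i, ∑ j, W (k+1) i j ≤ 1)) ∧
    ∃ Wmin : Matrix (Fin n) (Fin n) ℝ,
      Filter.Tendsto W Filter.atTop (nhds Wmin) ∧ Substoch Wmin ∧ D.QW τ Wmin ∧
      ∀ W', Substoch W' → D.QW τ W' → ∀ i j, Wmin i j ≤ W' i j := by
  have hτ0 : 0 < τ := hτ.2.1
  have hWrec' : ∀ k, W (k+1) = Fmap D τ (W k) := fun k => hWrec k
  have hddpos : ∀ i, 0 < 2*(D.s i)^2 - 2*τ*D.a i := dd_pos hτ hD
  -- the iterates are substochastic and increasing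
  have key : ∀ k, Substoch (W k) ∧ (∀ i j, W k i j ≤ W (k+1) i j) := by
    intro k
    induction k with
    | zero =>
      have h0 : Substoch (W 0) := by
        rw [hW0]
        exact ⟨fun i j => le_of_eq rfl, fun i => by simp⟩
      refine ⟨h0, fun i j => ?_⟩
      have h1 := (Fmap_sub hτ hD h0).1 i j
      rw [← hWrec' 0] at h1
      rw [hW0]
      simpa using h1
    | succ k ih =>
      have hs1 : Substoch (W (k+1)) := by rw [hWrec' k]; exact Fmap_sub hτ hD ih.1
      refine ⟨hs1, fun i j => ?_⟩
      rw [hWrec' k, hWrec' (k+1)]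
      exact Fmap_mono hτ hD ih.1 hs1 ih.2 i j
  have hmono : ∀ i j, Monotone fun k => W k i j :=
    fun i j => monotone_nat_of_le_succ fun k => (key k).2 i j
  have hbd1 : ∀ k i j, W k i j ≤ 1 := by
    intro k i j
    refine le_trans ?_ ((key k).1.2 i)
    exact Finset.single_le_sum (f := fun j => W k i j) (fun l _ => (key k).1.1 i l)
      (Finset.mem_univ j)
  have hbdd : ∀ i j, BddAbove (Set.range fun k => W k i j) := by
    intro i j
    refine ⟨1, fun y hy => ?_⟩
    obtain ⟨k, rfl⟩ := hy
    exact hbd1 k i j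
  set Wmin : Matrix (Fin n) (Fin n) ℝ := Matrix.of fun i j => ⨆ k, W k i j with hWmin
  have hWmin_apply : ∀ i j, Wmin i j = ⨆ k, W k i j := fun i j => rfl
  have htende : ∀ i j, Filter.Tendsto (fun k => W k i j) atTop (nhds (Wmin i j)) := by
    intro i j
    rw [hWmin_apply]
    exact tendsto_atTop_ciSup (hmono i j) (hbdd i j)
  have htend : Filter.Tendsto W atTop (nhds Wmin) := by
    refine tendsto_pi_nhds.2 ?_
    intro i
    refine tendsto_pi_nhds.2 ?_
    intro j
    exact htende i j
  have hle_min : ∀ k i j, W k i j ≤ Wmin i j := by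
    intro k i j
    rw [hWmin_apply]
    exact le_ciSup (hbdd i j) k
  have hWminsub : Substoch Wmin := by
    constructor
    · intro i j
      have := hle_min 0 i j
      rw [hW0] at this
      simpa using this
    · intro i
      have hsum : Filter.Tendsto (fun k => ∑ j, W k i j) atTop (nhds (∑ j, Wmin i j)) :=
        tendsto_finset_sum _ fun j _ => htende i j
      exact le_of_tendsto' hsum fun k => (key k).1.2 i
  have hsubs : ∀ k, Substoch (W k) := fun k => (key k).1
  -- fixed point
  have hfix : Wmin = Fmap D τ Wmin := by
    ext i j
    have h1 : Filter.Tendsto (fun k => W (k+1) i j) atTop (nhds (Wmin i j)) :=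
      (htende i j).comp (tendsto_add_atTop_nat 1)
    have hprod : Filter.Tendsto (fun k => (W k * W k) i j) atTop
        (nhds ((Wmin * Wmin) i j)) := by
      simp only [Matrix.mul_apply]
      exact tendsto_finset_sum _ fun l _ => (htende i l).mul (htende l j)
    have hB := Bm1_tendsto (τ := τ) hD hτ0 hsubs htend i j
    have h2 : Filter.Tendsto (fun k => W (k+1) i j) atTop (nhds (Fmap D τ Wmin i j)) := by
      have heq : (fun k => W (k+1) i j)
          = fun k => (2*(D.s i)^2 - 2*τ*D.a i)⁻¹
              * (D.Bm1 τ (W k) i j + (D.s i)^2 * ((W k * W k) i j)) := by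
        funext k
        rw [hWrec' k, Fmap_apply' hτ hD]
      rw [heq, Fmap_apply' hτ hD Wmin i j]
      exact ((hB.add (hprod.const_mul _)).const_mul _)
    exact tendsto_nhds_unique h1 h2
  have hQWmin : D.QW τ Wmin := (QW_iff_fixed hτ hD Wmin).2 hfix
  refine ⟨fun k => ⟨(key k).1.1, (key k).2, (key (k+1)).1.2⟩,
    Wmin, htend, hWminsub, hQWmin, ?_⟩
  intro W' hsub' hQW' i j
  have hfix' : W' = Fmap D τ W' := (QW_iff_fixed hτ hD W').1 hQW'
  have hk : ∀ k, ∀ i j, W k i j ≤ W' i j := by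
    intro k
    induction k with
    | zero => intro i j; rw [hW0]; simpa using hsub'.1 i j
    | succ k ih =>
      intro i j
      rw [hWrec' k]
      calc Fmap D τ (W k) i j ≤ Fmap D τ W' i j := Fmap_mono hτ hD (hsubs k) hsub' ih i j
        _ = W' i j := by rw [← hfix']
  rw [hWmin_apply]
  exact ciSup_le fun k => hk k i j
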